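/- Let X be a real Hilbert space, g : X → X a κ-contraction with 0 ≤ κ < 1, m ≥ 1, and points x_{j−m−1}, …, x_{j−1} ∈ X with residuals w_n := g(x_{n−1}) − x_{n−1} for n = j−m, …, j, all consecutive differences w_n − w_{n−1} nonzero. Suppose (α_{j−m−1}, …, α_{j−1}) ∈ ℝ^{m+1} minimizes ‖Σ_{n=j−m−1}^{j−1} α_n w_{n+1}‖ subject to Σ_n α_n = 1, and set η_n := Σ_{i=n−1}^{j−1} α_i. Then |1 − α_{j−m−1}| ‖e_{j−m}‖ ≤ (1 − κ)^{−1} ( Σ_{n=j−m+2}^{j} |α_{n−1}| ‖w_n‖ + |η_{j−m+2}| ‖w_{j−m+1}‖ + ‖w_{j−m}‖ ), where e_{j−m} := x_{j−m} − x_{j−m−1}. -/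

import Mathlib

lemma aux_orth {X : Type*} [NormedAddCommGroup X] [InnerProductSpace ℝ X]
    (u v : X) (h : ∀ t : ℝ, ‖u‖ ≤ ‖u + t • v‖) : ‖v‖ ≤ ‖u + v‖ := by
  have hr : (inner ℝ u v : ℝ) = 0 := by
    rcases eq_or_ne v 0 with rfl | hv
    · simp
    by_contra hne
    have hv2 : (0:ℝ) < ‖v‖ ^ 2 := by have := norm_pos_iff.mpr hv; positivity
    set t : ℝ := -(inner ℝ u v : ℝ) / ‖v‖ ^ 2 with ht
    have h1 := h t
    have h2 : ‖u‖ ^ 2 ≤ ‖u + t • v‖ ^ 2 := by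
      nlinarith [norm_nonneg u, norm_nonneg (u + t • v)]
    rw [norm_add_sq_real, real_inner_smul_right, norm_smul] at h2
    simp only [Real.norm_eq_abs, mul_pow, sq_abs] at h2
    have ht2 : t * ‖v‖ ^ 2 = -(inner ℝ u v : ℝ) := by rw [ht]; field_simp
    have hrr : (0:ℝ) < (inner ℝ u v : ℝ)^2 := by positivity
    nlinarith [sq_abs t, mul_pos hv2 hv2]
  have h2 : ‖v‖ ^ 2 ≤ ‖u + v‖ ^ 2 := by
    rw [norm_add_sq_real, hr]
    nlinarith [norm_nonneg u]
  nlinarith [norm_nonneg v, norm_nonneg (u + v)]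

/-- general-depth Anderson bound
`|1 - α_{j-m-1}| ‖e_{j-m}‖ ≤
  (1-κ)⁻¹ (Σ_{n=j-m+2}^{j} |α_{n-1}| ‖w_n‖ + |η_{j-m+2}| ‖w_{j-m+1}‖ + ‖w_{j-m}‖)`. -/
theorem stmt_5 {X : Type*} [NormedAddCommGroup X] [InnerProductSpace ℝ X] [CompleteSpace X]
    (g : X → X) (κ : ℝ) (hκ0 : 0 ≤ κ) (hκ1 : κ < 1)
    (hg : ∀ x y : X, ‖g y - g x‖ ≤ κ * ‖x - y‖)
    (m : ℕ) (hm : 1 ≤ m) (j : ℤ)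
    (x : ℤ → X) (w : ℤ → X)
    (hw : ∀ n, w n = g (x (n - 1)) - x (n - 1))
    (hwne : ∀ n ∈ Finset.Icc (j - (m : ℤ) + 1) j, w n ≠ w (n - 1))
    (α : ℤ → ℝ)
    (hsum : ∑ n ∈ Finset.Icc (j - (m : ℤ) - 1) (j - 1), α n = 1)
    (hmin : ∀ b : ℤ → ℝ, ∑ n ∈ Finset.Icc (j - (m : ℤ) - 1) (j - 1), b n = 1 →
      ‖∑ n ∈ Finset.Icc (j - (m : ℤ) - 1) (j - 1), α n • w (n + 1)‖ ≤
      ‖∑ n ∈ Finset.Icc (j - (m : ℤ) - 1) (j - 1), b n • w (n + 1)‖)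
    (η : ℤ → ℝ) (hη : ∀ n, η n = ∑ i ∈ Finset.Icc (n - 1) (j - 1), α i) :
    |1 - α (j - (m : ℤ) - 1)| * ‖x (j - (m : ℤ)) - x (j - (m : ℤ) - 1)‖ ≤
      (1 - κ)⁻¹ * ((∑ n ∈ Finset.Icc (j - (m : ℤ) + 2) j, |α (n - 1)| * ‖w n‖) +
        |η (j - (m : ℤ) + 2)| * ‖w (j - (m : ℤ) + 1)‖ + ‖w (j - (m : ℤ))‖) := by
  set s : ℤ := j - (m : ℤ) - 1 with hs
  rw [show j - (m : ℤ) + 2 = s + 3 from by omega, show j - (m : ℤ) + 1 = s + 2 from by omega,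
    show j - (m : ℤ) = s + 1 from by omega]
  set S : X := ∑ n ∈ Finset.Icc s (j - 1), α n • w (n + 1) with hS
  set T : X := ∑ n ∈ Finset.Icc (s + 2) (j - 1), α n • w (n + 1) with hT
  -- splitting the index sets
  have hsplit1 : Finset.Icc s (j - 1) = insert s (Finset.Icc (s + 1) (j - 1)) := by
    ext n; simp only [Finset.mem_Icc, Finset.mem_insert]; omega
  have hsplit2 : Finset.Icc (s + 1) (j - 1) = insert (s + 1) (Finset.Icc (s + 2) (j - 1)) := by
    ext n; simp only [Finset.mem_Icc, Finset.mem_insert]; omega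
  have hnot1 : s ∉ Finset.Icc (s + 1) (j - 1) := by simp [Finset.mem_Icc]
  have hnot2 : s + 1 ∉ Finset.Icc (s + 2) (j - 1) := by simp [Finset.mem_Icc]
  -- eta facts
  have hη2 : η (s + 2) = ∑ i ∈ Finset.Icc (s + 1) (j - 1), α i := by
    rw [hη]; congr 1; congr 1; omega
  have hη3 : η (s + 3) = ∑ i ∈ Finset.Icc (s + 2) (j - 1), α i := by
    rw [hη]; congr 1; congr 1; omega
  have F1 : α s = 1 - η (s + 2) := by
    rw [hη2]
    have := hsum
    rw [hsplit1, Finset.sum_insert hnot1] at this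
    linarith
  have F2 : α (s + 1) = η (s + 2) - η (s + 3) := by
    rw [hη2, hη3, hsplit2, Finset.sum_insert hnot2]; ring
  -- splitting S
  have hSsplit : S = α s • w (s + 1) + (α (s + 1) • w (s + 2) + T) := by
    rw [hS, hsplit1, Finset.sum_insert hnot1, hsplit2, Finset.sum_insert hnot2, hT,
      show s + 1 + 1 = s + 2 from by ring]
  -- key vector identity
  have hkey : η (s + 2) • (w (s + 2) - w (s + 1)) =
      (S - w (s + 1)) + (η (s + 3) • w (s + 2) + (-T)) := by
    rw [hSsplit, F1, F2]; module
  -- minimality ⇒ ‖S - w (s+1)‖ ≤ ‖w (s+1)‖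
  have hmem_s : s ∈ Finset.Icc s (j - 1) := by simp [Finset.mem_Icc]; omega
  have horth : ∀ t : ℝ, ‖S‖ ≤ ‖S + t • (w (s + 1) - S)‖ := by
    intro t
    have hbsum : ∑ n ∈ Finset.Icc s (j - 1),
        (α n + t * ((if n = s then (1:ℝ) else 0) - α n)) = 1 := by
      simp only [Finset.sum_add_distrib, ← Finset.mul_sum, Finset.sum_sub_distrib,
        Finset.sum_ite_eq', hmem_s, if_pos, hsum]
      ring
    have hbvec : ∑ n ∈ Finset.Icc s (j - 1),
        (α n + t * ((if n = s then (1:ℝ) else 0) - α n)) • w (n + 1)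
        = S + t • (w (s + 1) - S) := by
      simp only [add_smul, sub_smul, mul_smul, ite_smul, one_smul, zero_smul,
        Finset.sum_add_distrib, ← Finset.smul_sum, Finset.sum_sub_distrib,
        Finset.sum_ite_eq', hmem_s, if_pos]
      rfl
    have := hmin (fun n => α n + t * ((if n = s then (1:ℝ) else 0) - α n)) hbsum
    rwa [hbvec] at this
  have hproj : ‖S - w (s + 1)‖ ≤ ‖w (s + 1)‖ := by
    have := aux_orth S (w (s + 1) - S) horth
    rw [add_sub_cancel] at this
    rw [← norm_neg]
    simpa [neg_sub] using this
  -- bound on T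
  have hTle : ‖T‖ ≤ ∑ n ∈ Finset.Icc (s + 3) j, |α (n - 1)| * ‖w n‖ := by
    have h1 : ‖T‖ ≤ ∑ n ∈ Finset.Icc (s + 2) (j - 1), |α n| * ‖w (n + 1)‖ := by
      refine (norm_sum_le _ _).trans_eq ?_
      refine Finset.sum_congr rfl fun n _ => ?_
      rw [norm_smul, Real.norm_eq_abs]
    refine h1.trans_eq ?_
    refine Finset.sum_nbij' (fun n => n + 1) (fun n => n - 1) ?_ ?_ ?_ ?_ ?_
    · intro a ha; simp only [Finset.mem_Icc] at *; omega
    · intro a ha; simp only [Finset.mem_Icc] at *; omega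
    · intro a _; ring
    · intro a _; ring
    · intro a _; simp
  -- contraction bound
  have hcontr : (1 - κ) * ‖x (s + 1) - x s‖ ≤ ‖w (s + 2) - w (s + 1)‖ := by
    have hw2 : w (s + 2) = g (x (s + 1)) - x (s + 1) := by
      have := hw (s + 2); rwa [show s + 2 - 1 = s + 1 from by ring] at this
    have hw1 : w (s + 1) = g (x s) - x s := by
      have := hw (s + 1); rwa [show s + 1 - 1 = s from by ring] at this
    have hid : x (s + 1) - x s =
        (g (x (s + 1)) - g (x s)) - (w (s + 2) - w (s + 1)) := by
      rw [hw2, hw1]; abel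
    have h1 : ‖x (s + 1) - x s‖ ≤ ‖g (x (s + 1)) - g (x s)‖ + ‖w (s + 2) - w (s + 1)‖ := by
      rw [hid]; exact norm_sub_le _ _
    have h2 : ‖g (x (s + 1)) - g (x s)‖ ≤ κ * ‖x (s + 1) - x s‖ := by
      have := hg (x s) (x (s + 1))
      rwa [norm_sub_rev (x s)] at this
    nlinarith
  -- main norm chain
  have hchain : |η (s + 2)| * ‖w (s + 2) - w (s + 1)‖ ≤
      (∑ n ∈ Finset.Icc (s + 3) j, |α (n - 1)| * ‖w n‖) +
        |η (s + 3)| * ‖w (s + 2)‖ + ‖w (s + 1)‖ := by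
    have h0 : |η (s + 2)| * ‖w (s + 2) - w (s + 1)‖
        = ‖η (s + 2) • (w (s + 2) - w (s + 1))‖ := by
      rw [norm_smul, Real.norm_eq_abs]
    rw [h0, hkey]
    have h1 := norm_add_le (S - w (s + 1)) (η (s + 3) • w (s + 2) + (-T))
    have h2 := norm_add_le (η (s + 3) • w (s + 2)) (-T)
    rw [norm_neg] at h2
    rw [norm_smul, Real.norm_eq_abs] at h2
    linarith
  -- conclusion
  have hone : 1 - α s = η (s + 2) := by linarith [F1]
  rw [hone, le_inv_mul_iff₀ (by linarith : (0:ℝ) < 1 - κ)]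
  have habs : (0:ℝ) ≤ |η (s + 2)| := abs_nonneg _
  calc (1 - κ) * (|η (s + 2)| * ‖x (s + 1) - x s‖)
      = |η (s + 2)| * ((1 - κ) * ‖x (s + 1) - x s‖) := by ring
    _ ≤ |η (s + 2)| * ‖w (s + 2) - w (s + 1)‖ := by
        exact mul_le_mul_of_nonneg_left hcontr habs
    _ ≤ _ := hchain
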